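/- Let M′ be a real n×n matrix with unit diagonal (M′_{ii} = 1) and nonnegative off-diagonal entries, such that for every i both Σ_{j≠i} M′_{ij} < 1 and Σ_{j≠i} M′_{ji} < 1, and let Q ⊆ ℝ^n be a nonempty compact convex set. Then the variational inequality VI(Q, F) with the affine map F(p) = M′ p has exactly one solution: there is a unique p* ∈ Q with ⟨M′ p*, p − p*⟩ ≥ 0 for all p ∈ Q. -/

import Mathlib

open Matrix
open scoped InnerProductSpace

private lemma swapSum {n : ℕ} (f : Fin n → Fin n → ℝ) :
    ∑ i, ∑ j ∈ Finset.univ.erase i, f i j = ∑ j, ∑ i ∈ Finset.univ.erase j, f i j := by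
  simp only [← Finset.filter_ne', Finset.sum_filter]
  rw [Finset.sum_comm]
  exact Finset.sum_congr rfl fun j _ => Finset.sum_congr rfl fun i _ => if_congr ne_comm rfl rfl

private lemma coercive {n : ℕ} (M : Matrix (Fin n) (Fin n) ℝ)
    (hdiag : ∀ i, M i i = 1) (hoff : ∀ i j, i ≠ j → 0 ≤ M i j)
    (hrow : ∀ i, ∑ j ∈ Finset.univ.filter (· ≠ i), M i j < 1)
    (hcol : ∀ i, ∑ j ∈ Finset.univ.filter (· ≠ i), M j i < 1) :
    ∃ c : ℝ, 0 < c ∧ c ≤ 1 ∧ ∀ x : Fin n → ℝ, c * (x ⬝ᵥ x) ≤ M.mulVec x ⬝ᵥ x := by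
  simp only [Finset.filter_ne'] at hrow hcol
  rcases Nat.eq_zero_or_pos n with hn | hn
  · refine ⟨1, one_pos, le_refl 1, fun x => ?_⟩
    subst hn
    simp [dotProduct]
  · have hne : (Finset.univ : Finset (Fin n)).Nonempty :=
      Finset.univ_nonempty_iff.mpr (Fin.pos_iff_nonempty.mp hn)
    set r : Fin n → ℝ := fun i => ∑ j ∈ Finset.univ.erase i, M i j with hr
    set s : Fin n → ℝ := fun i => ∑ j ∈ Finset.univ.erase i, M j i with hs
    set c : ℝ := Finset.univ.inf' hne fun i => 1 - (r i + s i) / 2 with hc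
    have hr0 : ∀ i, 0 ≤ r i := fun i =>
      Finset.sum_nonneg fun j hj => hoff i j (Finset.ne_of_mem_erase hj).symm
    have hs0 : ∀ i, 0 ≤ s i := fun i =>
      Finset.sum_nonneg fun j hj => hoff j i (Finset.ne_of_mem_erase hj)
    have hcle : ∀ i, c ≤ 1 - (r i + s i) / 2 := fun i =>
      Finset.inf'_le _ (Finset.mem_univ i)
    refine ⟨c, ?_, ?_, ?_⟩
    · rw [hc, Finset.lt_inf'_iff]
      intro i _
      have h1 := hrow i
      have h2 := hcol i
      linarith
    · obtain i := Fin.mk 0 hn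
      have := hcle i
      have := hr0 i
      have := hs0 i
      linarith
    · intro x
      have hsplit : M.mulVec x ⬝ᵥ x
          = ∑ i, x i ^ 2 + ∑ i, ∑ j ∈ Finset.univ.erase i, M i j * x j * x i := by
        rw [← Finset.sum_add_distrib]
        simp only [dotProduct, Matrix.mulVec]
        refine Finset.sum_congr rfl fun i _ => ?_
        rw [Finset.sum_mul,
          (Finset.add_sum_erase Finset.univ (fun j => M i j * x j * x i)
            (Finset.mem_univ i)).symm, hdiag i]
        ring
      have hrearr : ∑ i, ∑ j ∈ Finset.univ.erase i, M i j * (x i ^ 2 + x j ^ 2) / 2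
          = ∑ i, ((r i + s i) / 2) * x i ^ 2 := by
        have h1 : ∀ i, ∑ j ∈ Finset.univ.erase i, M i j * (x i ^ 2 + x j ^ 2) / 2
            = (∑ j ∈ Finset.univ.erase i, M i j * x i ^ 2 / 2)
              + ∑ j ∈ Finset.univ.erase i, M i j * x j ^ 2 / 2 := by
          intro i
          rw [← Finset.sum_add_distrib]
          exact Finset.sum_congr rfl fun j _ => by ring
        have h2 : ∀ i, ∑ j ∈ Finset.univ.erase i, M i j * x i ^ 2 / 2 = r i * x i ^ 2 / 2 := by
          intro i; rw [← Finset.sum_div, ← Finset.sum_mul]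
        have h3 : ∀ j, ∑ i ∈ Finset.univ.erase j, M i j * x j ^ 2 / 2 = s j * x j ^ 2 / 2 := by
          intro j; rw [← Finset.sum_div, ← Finset.sum_mul]
        simp only [h1, Finset.sum_add_distrib]
        rw [swapSum fun i j => M i j * x j ^ 2 / 2]
        simp only [h2, h3]
        rw [← Finset.sum_add_distrib]
        exact Finset.sum_congr rfl fun i _ => by ring
      have hbound : -(∑ i, ((r i + s i) / 2) * x i ^ 2)
          ≤ ∑ i, ∑ j ∈ Finset.univ.erase i, M i j * x j * x i := by
        calc -(∑ i, ((r i + s i) / 2) * x i ^ 2)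
            = ∑ i, ∑ j ∈ Finset.univ.erase i, -(M i j * (x i ^ 2 + x j ^ 2) / 2) := by
              rw [← hrearr]; simp [Finset.sum_neg_distrib]
          _ ≤ ∑ i, ∑ j ∈ Finset.univ.erase i, M i j * x j * x i := by
              refine Finset.sum_le_sum fun i _ => Finset.sum_le_sum fun j hj => ?_
              have hM := hoff i j (Finset.ne_of_mem_erase hj).symm
              nlinarith [mul_nonneg hM (sq_nonneg (x i + x j))]
      have hfin : c * (x ⬝ᵥ x) ≤ ∑ i, x i ^ 2 - ∑ i, ((r i + s i) / 2) * x i ^ 2 := by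
        have hxx : x ⬝ᵥ x = ∑ i, x i ^ 2 := by simp [dotProduct, sq]
        rw [hxx, Finset.mul_sum, ← Finset.sum_sub_distrib]
        refine Finset.sum_le_sum fun i _ => ?_
        have := hcle i
        nlinarith [sq_nonneg (x i)]
      rw [hsplit]
      linarith

private lemma projNonexp {F : Type*} [NormedAddCommGroup F] [InnerProductSpace ℝ F]
    {u v a b : F} (h1 : ⟪u - a, b - a⟫_ℝ ≤ 0) (h2 : ⟪v - b, a - b⟫_ℝ ≤ 0) :
    ‖a - b‖ ≤ ‖u - v‖ := by
  by_cases h : a = b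
  · simp [h]
  · have hab : 0 < ‖a - b‖ := by
      simpa [norm_pos_iff, sub_eq_zero] using h
    have e : ⟪u - a, b - a⟫_ℝ + ⟪v - b, a - b⟫_ℝ
        = ⟪a - b, a - b⟫_ℝ - ⟪u - v, a - b⟫_ℝ := by
      simp only [inner_sub_left, inner_sub_right]
      ring
    have key : ⟪a - b, a - b⟫_ℝ ≤ ⟪u - v, a - b⟫_ℝ := by linarith
    have hns : ⟪a - b, a - b⟫_ℝ = ‖a - b‖ * ‖a - b‖ := real_inner_self_eq_norm_mul_norm _
    have := key.trans (real_inner_le_norm (u - v) (a - b))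
    rw [hns] at this
    exact le_of_mul_le_mul_right this hab

private lemma existsSol {n : ℕ} (M : Matrix (Fin n) (Fin n) ℝ) {c : ℝ} (hc0 : 0 < c)
    (hc1 : c ≤ 1) (hcoer : ∀ x : Fin n → ℝ, c * (x ⬝ᵥ x) ≤ M.mulVec x ⬝ᵥ x)
    (Q : Set (EuclideanSpace ℝ (Fin n))) (hQne : Q.Nonempty) (hQcp : IsCompact Q)
    (hQcv : Convex ℝ Q) :
    ∃ pstar ∈ Q, ∀ p ∈ Q, 0 ≤ (M.mulVec pstar) ⬝ᵥ (p - pstar) := by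
  classical
  let f : EuclideanSpace ℝ (Fin n) →L[ℝ] EuclideanSpace ℝ (Fin n) :=
    LinearMap.toContinuousLinearMap (Matrix.toEuclideanLin M)
  set L : ℝ := max ‖f‖ 1 with hL
  have hL1 : (1 : ℝ) ≤ L := le_max_right _ _
  have hL0 : (0 : ℝ) < L := lt_of_lt_of_le one_pos hL1
  have hfnorm : ∀ x : EuclideanSpace ℝ (Fin n), ‖f x‖ ≤ L * ‖x‖ := fun x =>
    (f.le_opNorm x).trans (mul_le_mul_of_nonneg_right (le_max_left _ _) (norm_nonneg x))
  have hdot : ∀ x y : EuclideanSpace ℝ (Fin n), ⟪x, y⟫_ℝ = (x : Fin n → ℝ) ⬝ᵥ y := by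
    intro x y
    simp [PiLp.inner_apply, RCLike.inner_apply, dotProduct, mul_comm]
  have hfx : ∀ x : EuclideanSpace ℝ (Fin n), f x = WithLp.toLp 2 (M.mulVec x) :=
    fun _ => rfl
  have hcoE : ∀ x : EuclideanSpace ℝ (Fin n), c * (‖x‖ * ‖x‖) ≤ ⟪f x, x⟫_ℝ := by
    intro x
    rw [hdot, hfx]
    have hn : ‖x‖ * ‖x‖ = (x : Fin n → ℝ) ⬝ᵥ x := by
      rw [← real_inner_self_eq_norm_mul_norm, hdot]
    rw [hn]
    exact hcoer x
  set γ : ℝ := c / L ^ 2 with hγ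
  have hγ0 : 0 < γ := div_pos hc0 (by positivity)
  have hγc : γ * c ≤ 1 := by
    rw [hγ, div_mul_eq_mul_div, div_le_one (by positivity)]
    nlinarith
  have hγL : γ * L ^ 2 = c := by
    rw [hγ, div_mul_cancel₀ _ (by positivity)]
  set k : ℝ := Real.sqrt (1 - γ * c) with hk
  have hk0 : 0 ≤ k := Real.sqrt_nonneg _
  have hksq : k ^ 2 = 1 - γ * c := Real.sq_sqrt (by linarith)
  have hk1 : k < 1 := by nlinarith [mul_pos hγ0 hc0]
  have hcontr : ∀ x : EuclideanSpace ℝ (Fin n), ‖x - γ • f x‖ ≤ k * ‖x‖ := by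
    intro x
    have hsq : ‖x - γ • f x‖ ^ 2 ≤ (1 - γ * c) * ‖x‖ ^ 2 := by
      have expand : ‖x - γ • f x‖ ^ 2
          = ‖x‖ ^ 2 - 2 * (γ * ⟪f x, x⟫_ℝ) + γ ^ 2 * ‖f x‖ ^ 2 := by
        rw [@norm_sub_sq_real, real_inner_smul_right, norm_smul,
          real_inner_comm x (f x), Real.norm_eq_abs, abs_of_pos hγ0]
        ring
      rw [expand]
      have h1 := hcoE x
      have h2 := hfnorm x
      have h3 : ‖f x‖ ^ 2 ≤ (L * ‖x‖) ^ 2 := by nlinarith [norm_nonneg (f x)]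
      have h4 : γ ^ 2 * ‖f x‖ ^ 2 ≤ γ ^ 2 * (L * ‖x‖) ^ 2 :=
        mul_le_mul_of_nonneg_left h3 (sq_nonneg γ)
      have h5 : γ ^ 2 * (L * ‖x‖) ^ 2 = γ * c * ‖x‖ ^ 2 := by
        rw [← hγL]; ring
      nlinarith
    calc ‖x - γ • f x‖ = Real.sqrt (‖x - γ • f x‖ ^ 2) := (Real.sqrt_sq (norm_nonneg _)).symm
      _ ≤ Real.sqrt ((1 - γ * c) * ‖x‖ ^ 2) := Real.sqrt_le_sqrt hsq
      _ = k * ‖x‖ := by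
          rw [Real.sqrt_mul (by linarith), Real.sqrt_sq (norm_nonneg _)]
  have hproj : ∀ u : EuclideanSpace ℝ (Fin n),
      ∃ v, v ∈ Q ∧ ∀ w ∈ Q, ⟪u - v, w - v⟫_ℝ ≤ 0 := by
    intro u
    obtain ⟨v, hv, hmin⟩ :=
      exists_norm_eq_iInf_of_complete_convex hQne hQcp.isComplete hQcv u
    exact ⟨v, hv, (norm_eq_iInf_iff_real_inner_le_zero hQcv hv).mp hmin⟩
  choose proj hprojQ hprojle using hproj
  set T : EuclideanSpace ℝ (Fin n) → EuclideanSpace ℝ (Fin n) :=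
    fun p => proj (p - γ • f p) with hT
  have hlip : LipschitzWith ⟨k, hk0⟩ T := by
    apply LipschitzWith.of_dist_le_mul
    intro p q
    rw [dist_eq_norm, dist_eq_norm]
    have step1 : ‖T p - T q‖ ≤ ‖(p - γ • f p) - (q - γ • f q)‖ :=
      projNonexp (hprojle _ _ (hprojQ (q - γ • f q))) (hprojle _ _ (hprojQ (p - γ • f p)))
    have step2 : (p - γ • f p) - (q - γ • f q) = (p - q) - γ • f (p - q) := by
      rw [map_sub, smul_sub]; abel
    calc ‖T p - T q‖ ≤ ‖(p - γ • f p) - (q - γ • f q)‖ := step1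
      _ = ‖(p - q) - γ • f (p - q)‖ := by rw [step2]
      _ ≤ k * ‖p - q‖ := hcontr _
  have hcw : ContractingWith ⟨k, hk0⟩ T := ⟨by exact_mod_cast hk1, hlip⟩
  have : Nonempty (EuclideanSpace ℝ (Fin n)) := ⟨0⟩
  set pstar : EuclideanSpace ℝ (Fin n) := ContractingWith.fixedPoint T hcw with hps
  have hfix : T pstar = pstar := ContractingWith.fixedPoint_isFixedPt hcw
  have hpsQ : pstar ∈ Q := hfix ▸ hprojQ _
  refine ⟨pstar, hpsQ, ?_⟩
  intro w hw
  have h := hprojle (pstar - γ • f pstar) w hw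
  rw [show proj (pstar - γ • f pstar) = pstar from hfix] at h
  have heq : (pstar - γ • f pstar) - pstar = -(γ • f pstar) := by abel
  rw [heq, inner_neg_left, real_inner_smul_left] at h
  have h' : 0 ≤ ⟪f pstar, w - pstar⟫_ℝ := nonneg_of_mul_nonneg_right (by linarith) hγ0
  rw [hdot, hfx] at h'
  exact h'

theorem stmt13 (n : ℕ) (M : Matrix (Fin n) (Fin n) ℝ)
    (hdiag : ∀ i, M i i = 1) (hoff : ∀ i j, i ≠ j → 0 ≤ M i j)
    (hrow : ∀ i, ∑ j ∈ Finset.univ.filter (· ≠ i), M i j < 1)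
    (hcol : ∀ i, ∑ j ∈ Finset.univ.filter (· ≠ i), M j i < 1)
    (Q : Set (Fin n → ℝ)) (hQne : Q.Nonempty) (hQcp : IsCompact Q)
    (hQcv : Convex ℝ Q) :
    ∃! pstar : Fin n → ℝ, pstar ∈ Q ∧
      ∀ p ∈ Q, 0 ≤ (M.mulVec pstar) ⬝ᵥ (p - pstar) := by
  obtain ⟨c, hc0, hc1, hcoer⟩ := coercive M hdiag hoff hrow hcol
  have huniq : ∀ p q : Fin n → ℝ, p ∈ Q → q ∈ Q →
      (∀ w ∈ Q, 0 ≤ (M.mulVec p) ⬝ᵥ (w - p)) →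
      (∀ w ∈ Q, 0 ≤ (M.mulVec q) ⬝ᵥ (w - q)) → p = q := by
    intro p q hp hq h1 h2
    have e1 := h1 q hq
    have e2 := h2 p hp
    have key : M.mulVec (p - q) ⬝ᵥ (p - q) ≤ 0 := by
      rw [Matrix.mulVec_sub, sub_dotProduct]
      have hpq : (M.mulVec p) ⬝ᵥ (p - q) = -((M.mulVec p) ⬝ᵥ (q - p)) := by
        rw [← dotProduct_neg, neg_sub]
      rw [hpq]
      linarith
    have hco := hcoer (p - q)
    have hxx : (p - q) ⬝ᵥ (p - q) = 0 := by
      have h0 : 0 ≤ (p - q) ⬝ᵥ (p - q) :=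
        Finset.sum_nonneg fun i _ => mul_self_nonneg _
      nlinarith
    have := dotProduct_self_eq_zero.mp hxx
    exact sub_eq_zero.mp this
  obtain ⟨pstar, hpsQ, hVI⟩ :=
    existsSol M hc0 hc1 hcoer ((EuclideanSpace.equiv (Fin n) ℝ).symm '' Q) (hQne.image _)
      (hQcp.image (EuclideanSpace.equiv (Fin n) ℝ).symm.continuous)
      (hQcv.linear_image (EuclideanSpace.equiv (Fin n) ℝ).symm.toLinearMap)
  obtain ⟨q0, hq0, rfl⟩ := hpsQ
  have hVI' : ∀ p ∈ Q, 0 ≤ (M.mulVec q0) ⬝ᵥ (p - q0) := fun p hp => hVI _ ⟨p, hp, rfl⟩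
  exact ⟨q0, ⟨hq0, hVI'⟩, fun q hq => huniq q q0 hq.1 hq0 hq.2 hVI'⟩
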